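/- Let V be a complex Hilbert space with two inner products inducing norms ‖·‖_a and ‖·‖_s, π a projection, B a sesquilinear form, and φ ∈ V a unit vector in the s-norm (‖φ‖_s = 1). Suppose T_φ ∈ V satisfies B(T_φ, T_φ) + s(π T_φ, π T_φ) = s(φ, π T_φ) and |B(v,v) + s(πv, πv)| ≥ α(‖v‖_a² + ‖πv‖_s²) for all v. Then ‖π T_φ‖_s ≤ α⁻¹ and ‖T_φ‖_a ≤ α⁻¹. -/

import Mathlib

/-- A-priori bound on multiscale basis functions (used in Theorem 6): if
`B(Tφ,Tφ) + s(πTφ, πTφ) = s(φ, πTφ)`, coercivity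
`|B(v,v) + s(πv,πv)| ≥ α(‖v‖_a² + ‖πv‖_s²)` holds, `‖φ‖_s = 1`, and `s`
satisfies the Cauchy–Schwarz inequality `|s(w,v)| ≤ ‖w‖_s‖v‖_s`, then
`‖πTφ‖_s ≤ α⁻¹` and `‖Tφ‖_a ≤ α⁻¹`. -/
theorem basis_apriori_bound {V : Type*} [AddCommGroup V] [Module ℂ V]
    (B s : V → V → ℂ) (π : V →ₗ[ℂ] V) (na ns : V → ℝ)
    (α : ℝ) (hα : 0 < α)
    (hna : ∀ v, 0 ≤ na v) (hns : ∀ v, 0 ≤ ns v)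
    (hCS : ∀ w v, ‖s w v‖ ≤ ns w * ns v)
    (hcoerc : ∀ v, α * ((na v) ^ 2 + (ns (π v)) ^ 2)
      ≤ ‖B v v + s (π v) (π v)‖)
    (φ Tφ : V) (hφ : ns φ = 1)
    (hvar : B Tφ Tφ + s (π Tφ) (π Tφ) = s φ (π Tφ)) :
    ns (π Tφ) ≤ α⁻¹ ∧ na Tφ ≤ α⁻¹ := by
  set x := na Tφ with hx
  set y := ns (π Tφ) with hy
  have hx0 := hna Tφ
  have hy0 := hns (π Tφ)
  have key : α * (x ^ 2 + y ^ 2) ≤ y := by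
    calc α * (x ^ 2 + y ^ 2) ≤ ‖B Tφ Tφ + s (π Tφ) (π Tφ)‖ := hcoerc Tφ
      _ = ‖s φ (π Tφ)‖ := by rw [hvar]
      _ ≤ ns φ * y := hCS φ (π Tφ)
      _ = y := by rw [hφ, one_mul]
  have hyb : y ≤ α⁻¹ := by
    rcases eq_or_lt_of_le hy0 with h | h
    · show ns (π Tφ) ≤ α⁻¹
      rw [← h]; positivity
    · have h1 : α * y ^ 2 ≤ y := le_trans (by nlinarith [sq_nonneg x]) key
      have h2 : α * α⁻¹ = 1 := mul_inv_cancel₀ (ne_of_gt hα)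
      by_contra hc
      push_neg at hc
      nlinarith [mul_lt_mul_of_pos_left hc hα]
  refine ⟨hyb, ?_⟩
  have hxb : α * x ^ 2 ≤ α⁻¹ := le_trans (by nlinarith [sq_nonneg y]) (le_trans key hyb)
  have hsq : x ^ 2 ≤ (α⁻¹) ^ 2 := by
    have h2 : α⁻¹ * α = 1 := inv_mul_cancel₀ (ne_of_gt hα)
    nlinarith
  calc x = √(x ^ 2) := by rw [Real.sqrt_sq hx0]
    _ ≤ √((α⁻¹) ^ 2) := Real.sqrt_le_sqrt hsq
    _ = α⁻¹ := Real.sqrt_sq (by positivity)
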